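/- Let n ∈ ℕ with n ≥ 1, let Ω ⊆ ℝⁿ be a bounded measurable set equipped with Lebesgue measure, let M be a closed subspace of the real Hilbert space L²(Ω), and let P denote the orthogonal projection of L²(Ω) onto M. Let w ∈ L²(Ω) be orthogonal to M, and let γ : ℝⁿ → ℝ be Lipschitz continuous with Lipschitz constant L ≥ 0. Then the pointwise product γ·w belongs to L²(Ω) and ‖P(γ·w)‖_{L²(Ω)} ≤ L · diam(Ω) · ‖w‖_{L²(Ω)}. -/

import Mathlib

open MeasureTheory

/-- Key step of the proof of Theorem 2(b): if `Ω ⊆ ℝⁿ` is bounded and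
measurable, `M` a closed subspace of `L²(Ω)`, `P` the orthogonal projection
onto `M`, `w ∈ L²(Ω)` orthogonal to `M`, and `γ` is `L`-Lipschitz, then
`γ·w ∈ L²(Ω)` and `‖P(γ·w)‖ ≤ L · diam(Ω) · ‖w‖`. -/
theorem projection_of_lipschitz_times_orthogonal
    (n : ℕ) (hn : 1 ≤ n)
    (Ω : Set (EuclideanSpace ℝ (Fin n)))
    (hΩm : MeasurableSet Ω) (hΩb : Bornology.IsBounded Ω)
    (μ : Measure (EuclideanSpace ℝ (Fin n))) (hμ : μ = volume.restrict Ω)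
    (M : Submodule ℝ (Lp ℝ 2 μ)) (hMc : IsClosed (M : Set (Lp ℝ 2 μ)))
    (P : Lp ℝ 2 μ →L[ℝ] Lp ℝ 2 μ)
    (hPmem : ∀ f : Lp ℝ 2 μ, P f ∈ M)
    (hPorth : ∀ f : Lp ℝ 2 μ, ∀ m ∈ M, (inner ℝ (f - P f) m : ℝ) = 0)
    (w : Lp ℝ 2 μ) (hw : ∀ m ∈ M, (inner ℝ w m : ℝ) = 0)
    (γ : EuclideanSpace ℝ (Fin n) → ℝ) (L : ℝ) (hL : 0 ≤ L)
    (hγ : ∀ x y, |γ x - γ y| ≤ L * dist x y) :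
    ∃ hmem : MemLp (fun x => γ x * w x) 2 μ,
      ‖P (hmem.toLp _)‖ ≤ L * Metric.diam Ω * ‖w‖ := by
  -- Lipschitz continuity of γ
  have hlip : LipschitzWith ⟨L, hL⟩ γ := by
    apply LipschitzWith.of_dist_le_mul
    intro x y
    rw [Real.dist_eq]
    exact hγ x y
  rcases Set.eq_empty_or_nonempty Ω with hΩ | ⟨x₀, hx₀⟩
  · -- empty case: the measure is zero
    have hμ0 : μ = 0 := by rw [hμ, hΩ, Measure.restrict_empty]
    have hnorm0 : ∀ f : EuclideanSpace ℝ (Fin n) → ℝ, eLpNorm f 2 μ = 0 := by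
      intro f; rw [hμ0]; exact eLpNorm_measure_zero
    have hmeas0 : ∀ f : EuclideanSpace ℝ (Fin n) → ℝ, AEStronglyMeasurable f μ := by
      intro f; rw [hμ0]; exact aestronglyMeasurable_zero_measure f
    have hmem : MemLp (fun x => γ x * w x) 2 μ :=
      ⟨hmeas0 _, by rw [hnorm0]; exact ENNReal.zero_lt_top⟩
    refine ⟨hmem, ?_⟩
    have hz : ‖P (hmem.toLp _)‖ = 0 := by
      rw [Lp.norm_def, hnorm0]
      rfl
    rw [hz]
    positivity
  · set c : ℝ := γ x₀ with hc
    set C : ℝ := L * Metric.diam Ω with hC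
    have hCnn : 0 ≤ C := mul_nonneg hL Metric.diam_nonneg
    have hmemx : ∀ᵐ x ∂μ, x ∈ Ω := by
      rw [hμ]; exact ae_restrict_mem hΩm
    have hbound1 : ∀ᵐ x ∂μ, ‖(γ x - c) * w x‖ ≤ C * ‖w x‖ := by
      filter_upwards [hmemx] with x hx
      rw [norm_mul]
      apply mul_le_mul_of_nonneg_right _ (norm_nonneg _)
      calc ‖γ x - c‖ = |γ x - γ x₀| := rfl
        _ ≤ L * dist x x₀ := hγ x x₀
        _ ≤ L * Metric.diam Ω :=
            mul_le_mul_of_nonneg_left (Metric.dist_le_diam_of_mem hΩb hx hx₀) hL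
    have hmeas1 : AEStronglyMeasurable (fun x => (γ x - c) * w x) μ :=
      ((hlip.continuous.sub continuous_const).aestronglyMeasurable).mul
        (Lp.aestronglyMeasurable w)
    have hf1 : MemLp (fun x => (γ x - c) * w x) 2 μ :=
      (Lp.memLp w).of_le_mul hmeas1 hbound1
    have hmem : MemLp (fun x => γ x * w x) 2 μ := by
      have heq : (fun x => γ x * w x) = fun x => (γ x - c) * w x + c * w x := by
        funext x; ring
      rw [heq]
      exact hf1.add ((Lp.memLp w).const_mul c)
    refine ⟨hmem, ?_⟩
    -- P w = 0
    have hPw : P w = 0 := by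
      have h1 := hPorth w (P w) (hPmem w)
      have h2 := hw (P w) (hPmem w)
      rw [inner_sub_left, h2] at h1
      have : (inner ℝ (P w) (P w) : ℝ) = 0 := by linarith
      exact inner_self_eq_zero.mp this
    -- toLp decomposition
    have heqLp : hmem.toLp _ = hf1.toLp _ + c • w := by
      apply Lp.ext
      filter_upwards [hmem.coeFn_toLp, hf1.coeFn_toLp,
        Lp.coeFn_add (hf1.toLp _) (c • w), Lp.coeFn_smul c w] with x h1 h2 h3 h4
      rw [h1, h3, Pi.add_apply, h2, h4, Pi.smul_apply, smul_eq_mul]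
      ring
    rw [heqLp, map_add, P.map_smul, hPw, smul_zero, add_zero]
    -- P is norm-nonincreasing
    have hPle : ∀ f : Lp ℝ 2 μ, ‖P f‖ ≤ ‖f‖ := by
      intro f
      have h := hPorth f (P f) (hPmem f)
      have hsq := norm_add_sq_real (f - P f) (P f)
      rw [sub_add_cancel, h] at hsq
      nlinarith [norm_nonneg (f - P f), norm_nonneg f, norm_nonneg (P f)]
    refine le_trans (hPle _) ?_
    -- ‖hf1.toLp‖ ≤ C * ‖w‖
    have hle : eLpNorm (fun x => (γ x - c) * w x) 2 μ ≤ eLpNorm (C • (w : _ → ℝ)) 2 μ := by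
      apply eLpNorm_mono_ae
      filter_upwards [hbound1] with x hx
      simpa [abs_of_nonneg hCnn, abs_mul] using hx
    rw [Lp.norm_toLp _ hf1]
    calc (eLpNorm (fun x => (γ x - c) * w x) 2 μ).toReal
        ≤ (eLpNorm (C • (w : _ → ℝ)) 2 μ).toReal := by
          apply ENNReal.toReal_mono _ hle
          rw [eLpNorm_const_smul]
          exact ENNReal.mul_ne_top ENNReal.coe_ne_top (Lp.eLpNorm_ne_top w)
      _ = C * ‖w‖ := by
          rw [eLpNorm_const_smul, ENNReal.toReal_mul, Lp.norm_def]
          simp [abs_of_nonneg hCnn]
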